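/- Consider two schedules for a finite set of vehicles over stages t, …, t+W that charge the same total number of vehicles at every stage (A_k = Ā_k for all k) and produce, for each vehicle, residual demands ρ and ρ̄ at the deadlines such that the multiset {ρ̄_v} is obtained from {ρ_v} by transferring one unit from a vehicle with strictly larger residual to one with strictly smaller residual. Then for any cost of the form Σ_k C(A_k, s_k) + Σ_v q(ρ_v) with q having nonnegative nondecreasing increments, the second schedule's total cost is no greater than the first's. -/

import Mathlib

lemma incr_mono (q : ℕ → ℝ)
    (hq : ∀ n : ℕ, 1 ≤ n → 0 ≤ q n - q (n - 1) ∧ q n - q (n - 1) ≤ q (n + 1) - q n) :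
    ∀ m n : ℕ, 1 ≤ m → m ≤ n → q m - q (m - 1) ≤ q n - q (n - 1) := by
  intro m n hm hmn
  induction n with
  | zero => omega
  | succ k ih =>
    rcases Nat.lt_or_ge m (k + 1) with h | h
    · have hk : 1 ≤ k := by omega
      have := (hq k hk).2
      have h2 := ih (by omega)
      simpa using h2.trans (by simpa using this)
    · have : m = k + 1 := by omega
      subst this; exact le_refl _

/-- If two schedules charge the same aggregate number of vehicles at every stage
of the window, and the residuals of the second are obtained from those of the
first by transferring one unit from a vehicle `u` with strictly larger residual
to a vehicle `v` with strictly smaller residual, then for any charging cost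
`C(A, s)` and any penalty `q` with nonnegative nondecreasing increments, the
second schedule's total cost is no greater. -/
theorem transfer_reduces_total_cost {V S : Type*} [Fintype V] [DecidableEq V]
    (C : ℕ → S → ℝ) (q : ℕ → ℝ) (hq0 : q 0 = 0)
    (hq : ∀ n : ℕ, 1 ≤ n → 0 ≤ q n - q (n - 1) ∧ q n - q (n - 1) ≤ q (n + 1) - q n)
    (t W : ℕ) (A A' : ℕ → ℕ) (s : ℕ → S)
    (hA : ∀ k, t ≤ k → k ≤ t + W → A k = A' k)
    (ρ ρ' : V → ℕ) (u v : V) (huv : u ≠ v) (hlt : ρ v < ρ u)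
    (hu : ρ' u = ρ u - 1) (hv : ρ' v = ρ v + 1)
    (hother : ∀ w : V, w ≠ u → w ≠ v → ρ' w = ρ w) :
    (∑ k ∈ Finset.Icc t (t + W), C (A' k) (s k)) + ∑ x : V, q (ρ' x) ≤
      (∑ k ∈ Finset.Icc t (t + W), C (A k) (s k)) + ∑ x : V, q (ρ x) := by
  have hCeq : (∑ k ∈ Finset.Icc t (t + W), C (A' k) (s k)) =
      ∑ k ∈ Finset.Icc t (t + W), C (A k) (s k) := by
    refine Finset.sum_congr rfl fun k hk => ?_
    rw [Finset.mem_Icc] at hk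
    rw [hA k hk.1 hk.2]
  rw [hCeq]
  refine add_le_add le_rfl ?_
  -- reduce to the two vehicles
  have hu1 : 1 ≤ ρ u := by omega
  have hkey : q (ρ' u) + q (ρ' v) ≤ q (ρ u) + q (ρ v) := by
    rw [hu, hv]
    have h := incr_mono q hq (ρ v + 1) (ρ u) (by omega) (by omega)
    simp only [Nat.add_sub_cancel] at h
    linarith
  have hvmem : v ∈ Finset.univ.erase u := by
    simp [Ne.symm huv]
  rw [← Finset.add_sum_erase _ (fun x => q (ρ' x)) (Finset.mem_univ u),
      ← Finset.add_sum_erase _ (fun x => q (ρ' x)) hvmem,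
      ← Finset.add_sum_erase _ (fun x => q (ρ x)) (Finset.mem_univ u),
      ← Finset.add_sum_erase _ (fun x => q (ρ x)) hvmem]
  have hrest : ∑ x ∈ (Finset.univ.erase u).erase v, q (ρ' x) =
      ∑ x ∈ (Finset.univ.erase u).erase v, q (ρ x) := by
    refine Finset.sum_congr rfl fun x hx => ?_
    simp only [Finset.mem_erase] at hx
    rw [hother x hx.2.1 hx.1]
  rw [hrest]
  linarith
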